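/- Local robustness of the orthogonalized acquisition (Corollary 1): Under the stated assumptions, for any b ∈ ℝ^d, assume there exists δ > 0 such that E[exp(δ |bᵀ g|)] < ∞ and E[|r| exp(δ |bᵀ g|)] < ∞, and define the tilted expectation F(ε) := E[r exp(ε bᵀ g)] / E[exp(ε bᵀ g)] for |ε| < δ. Then F is differentiable at ε = 0 with F′(0) = 0; i.e., the orthogonalized acquisition is first-order insensitive to score-tilt perturbations of the sampling distribution. -/

import Mathlib

open MeasureTheory ProbabilityTheory Matrix

section Aux

open Metric Real

variable {Ω : Type*} [MeasurableSpace Ω] {μ : Measure Ω} [IsProbabilityMeasure μ]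

/-- L²·L² products are integrable. -/
lemma aux_integrable_mul {f₁ f₂ : Ω → ℝ} (h1 : MemLp f₁ 2 μ) (h2 : MemLp f₂ 2 μ) :
    Integrable (fun ω => f₁ ω * f₂ ω) μ := by
  have := h2.smul (r := 1) h1
  rw [memLp_one_iff_integrable] at this
  exact this

/-- Key pointwise bound: `|X| e^{εX} ≤ (2/δ) e^{δ|X|}` for `|ε| < δ/2`. -/
lemma aux_bound {δ : ℝ} (hδ : 0 < δ) (x ε : ℝ) (hε : |ε| < δ / 2) :
    |x| * Real.exp (ε * x) ≤ (2 / δ) * Real.exp (δ * |x|) := by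
  have h1 : Real.exp (ε * x) ≤ Real.exp ((δ / 2) * |x|) := by
    apply Real.exp_le_exp.mpr
    calc ε * x ≤ |ε * x| := le_abs_self _
      _ = |ε| * |x| := abs_mul _ _
      _ ≤ (δ / 2) * |x| := mul_le_mul_of_nonneg_right hε.le (abs_nonneg x)
  have h3 : δ * |x| ≤ 2 * Real.exp ((δ / 2) * |x|) := by
    have := Real.add_one_le_exp ((δ / 2) * |x|)
    linarith
  have h4 : Real.exp ((δ / 2) * |x|) * Real.exp ((δ / 2) * |x|) = Real.exp (δ * |x|) := by
    rw [← Real.exp_add]; ring_nf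
  rw [div_mul_eq_mul_div, le_div_iff₀ hδ]
  calc |x| * Real.exp (ε * x) * δ = (δ * |x|) * Real.exp (ε * x) := by ring
    _ ≤ (2 * Real.exp ((δ / 2) * |x|)) * Real.exp ((δ / 2) * |x|) :=
        mul_le_mul h3 h1 (Real.exp_pos _).le (by positivity)
    _ = 2 * Real.exp (δ * |x|) := by rw [mul_assoc, h4]

end Aux

/-- **Local robustness of the orthogonalized acquisition (Corollary 1).**
For any direction `b`, the tilted expectation
`F(ε) = E[r e^{ε bᵀg}]/E[e^{ε bᵀg}]` of the orthogonalized acquisition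
`r = h − γᵀ g` is differentiable at `0` with `F′(0) = 0`. -/
theorem orthogonalized_acquisition_local_robustness
    {Ω : Type*} [MeasurableSpace Ω] (μ : Measure Ω) [IsProbabilityMeasure μ]
    {d : ℕ} (h : Ω → ℝ) (g : Ω → Fin d → ℝ)
    (hh : MemLp h 2 μ)
    (hg : ∀ i, MemLp (fun ω => g ω i) 2 μ)
    (hgmean : ∀ i, ∫ ω, g ω i ∂μ = 0)
    (Sg : Matrix (Fin d) (Fin d) ℝ)
    (hSg : ∀ i j, Sg i j = ∫ ω, g ω i * g ω j ∂μ)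
    (hSginv : IsUnit Sg.det)
    (covgh : Fin d → ℝ)
    (hcovgh : ∀ i, covgh i = ∫ ω, g ω i * (h ω - ∫ ω', h ω' ∂μ) ∂μ)
    (γ : Fin d → ℝ) (hγ : γ = Sg⁻¹ *ᵥ covgh)
    (r : Ω → ℝ) (hr : ∀ ω, r ω = h ω - ∑ i, γ i * g ω i)
    (b : Fin d → ℝ) (δ : ℝ) (hδ : 0 < δ)
    (hexp : Integrable (fun ω => Real.exp (δ * |∑ i, b i * g ω i|)) μ)
    (hrexp : Integrable (fun ω => |r ω| * Real.exp (δ * |∑ i, b i * g ω i|)) μ)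
    (F : ℝ → ℝ)
    (hF : ∀ ε : ℝ, |ε| < δ →
      F ε = (∫ ω, r ω * Real.exp (ε * ∑ i, b i * g ω i) ∂μ)
              / (∫ ω, Real.exp (ε * ∑ i, b i * g ω i) ∂μ)) :
    HasDerivAt F 0 0 := by
  classical
  set X : Ω → ℝ := fun ω => ∑ i, b i * g ω i with hXdef
  -- basic Memℒp facts
  have hX2 : MemLp X 2 μ := memLp_finset_sum _ fun i _ => (hg i).const_mul (b i)
  have hr2 : MemLp r 2 μ := by
    have h0 : MemLp (fun ω => h ω - ∑ i, γ i * g ω i) 2 μ :=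
      hh.sub (memLp_finset_sum _ fun i _ => (hg i).const_mul (γ i))
    have : r = fun ω => h ω - ∑ i, γ i * g ω i := funext hr
    rw [this]; exact h0
  have hXm : AEStronglyMeasurable X μ := hX2.1
  have hrm : AEStronglyMeasurable r μ := hr2.1
  -- the orthogonality: ∫ r·g_j = 0
  have hSgsymm : ∀ i j, Sg i j = Sg j i := by
    intro i j; rw [hSg, hSg]; simp_rw [mul_comm]
  have hSgγ : Sg *ᵥ γ = covgh := by
    rw [hγ, Matrix.mulVec_mulVec, Matrix.mul_nonsing_inv Sg hSginv, Matrix.one_mulVec]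
  have hgh_int : ∀ j, Integrable (fun ω => h ω * g ω j) μ :=
    fun j => aux_integrable_mul hh (hg j)
  have hgg_int : ∀ i j, Integrable (fun ω => g ω i * g ω j) μ :=
    fun i j => aux_integrable_mul (hg i) (hg j)
  have hgh : ∀ j, ∫ ω, h ω * g ω j ∂μ = covgh j := by
    intro j
    rw [hcovgh j]
    have : ∀ ω, g ω j * (h ω - ∫ ω', h ω' ∂μ) =
        h ω * g ω j - (∫ ω', h ω' ∂μ) * g ω j := by intro ω; ring
    simp_rw [this]
    rw [integral_sub (hgh_int j) (((hg j).integrable one_le_two).const_mul _),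
      integral_const_mul, hgmean j, mul_zero, sub_zero]
  have hrg : ∀ j, ∫ ω, r ω * g ω j ∂μ = 0 := by
    intro j
    have hexpand : ∀ ω, r ω * g ω j =
        h ω * g ω j - ∑ i, γ i * (g ω i * g ω j) := by
      intro ω; rw [hr ω, sub_mul, Finset.sum_mul]
      congr 1; exact Finset.sum_congr rfl fun i _ => by ring
    simp_rw [hexpand]
    rw [integral_sub (hgh_int j)
        (integrable_finset_sum _ fun i _ => ((hgg_int i j).const_mul (γ i))),
      integral_finset_sum _ fun i _ => ((hgg_int i j).const_mul (γ i))]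
    have : ∀ i, ∫ ω, γ i * (g ω i * g ω j) ∂μ = γ i * Sg i j := by
      intro i; rw [integral_const_mul, hSg]
    simp_rw [this]
    have hmv : ∑ i, γ i * Sg i j = (Sg *ᵥ γ) j := by
      rw [Matrix.mulVec, dotProduct]
      exact Finset.sum_congr rfl fun i _ => by rw [hSgsymm i j]; ring
    rw [hgh j, hmv, hSgγ, sub_self]
  -- ∫ r·X = 0
  have hrX_int : ∀ j, Integrable (fun ω => r ω * (b j * g ω j)) μ :=
    fun j => aux_integrable_mul hr2 ((hg j).const_mul (b j))
  have hrX : ∫ ω, r ω * X ω ∂μ = 0 := by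
    simp_rw [hXdef, Finset.mul_sum]
    rw [integral_finset_sum _ fun j _ => hrX_int j]
    refine Finset.sum_eq_zero fun j _ => ?_
    have : ∀ ω, r ω * (b j * g ω j) = b j * (r ω * g ω j) := fun ω => by ring
    simp_rw [this]
    rw [integral_const_mul, hrg j, mul_zero]
  -- ∫ X = 0
  have hX_int : Integrable X μ := hX2.integrable one_le_two
  have hXmean : ∫ ω, X ω ∂μ = 0 := by
    simp_rw [hXdef]
    rw [integral_finset_sum _ fun i _ => ((hg i).integrable one_le_two).const_mul (b i)]
    refine Finset.sum_eq_zero fun i _ => ?_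
    rw [integral_const_mul, hgmean i, mul_zero]
  -- differentiation under the integral for D(ε) = ∫ e^{εX}
  have hbound_int : Integrable (fun ω => (2 / δ) * Real.exp (δ * |X ω|)) μ :=
    hexp.const_mul _
  have hD := hasDerivAt_integral_of_dominated_loc_of_deriv_le (μ := μ)
    (F := fun ε ω => Real.exp (ε * X ω))
    (F' := fun ε ω => X ω * Real.exp (ε * X ω)) (x₀ := 0)
    (bound := fun ω => (2 / δ) * Real.exp (δ * |X ω|))
    (Metric.ball_mem_nhds 0 (half_pos hδ))
    (Filter.Eventually.of_forall fun ε =>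
      (Real.continuous_exp.comp_aestronglyMeasurable (hXm.const_mul ε)))
    (by simpa using (integrable_const (1 : ℝ)))
    (hXm.mul (Real.continuous_exp.comp_aestronglyMeasurable (hXm.const_mul 0)))
    (Filter.Eventually.of_forall fun ω ε hε => by
      rw [Real.norm_eq_abs, abs_mul, abs_of_pos (Real.exp_pos _)]
      exact aux_bound hδ (X ω) ε (by simpa [Metric.mem_ball, Real.dist_eq] using hε))
    hbound_int
    (Filter.Eventually.of_forall fun ω ε hε => by
      simpa [mul_comm] using ((hasDerivAt_mul_const (X ω)).exp (x := ε)))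
  -- differentiation under the integral for N(ε) = ∫ r e^{εX}
  have hrbound_int : Integrable (fun ω => (2 / δ) * (|r ω| * Real.exp (δ * |X ω|))) μ :=
    hrexp.const_mul _
  have hN := hasDerivAt_integral_of_dominated_loc_of_deriv_le (μ := μ)
    (F := fun ε ω => r ω * Real.exp (ε * X ω))
    (F' := fun ε ω => r ω * (X ω * Real.exp (ε * X ω))) (x₀ := 0)
    (bound := fun ω => (2 / δ) * (|r ω| * Real.exp (δ * |X ω|)))
    (Metric.ball_mem_nhds 0 (half_pos hδ))
    (Filter.Eventually.of_forall fun ε =>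
      hrm.mul (Real.continuous_exp.comp_aestronglyMeasurable (hXm.const_mul ε)))
    (by simpa using hr2.integrable one_le_two)
    (hrm.mul (hXm.mul (Real.continuous_exp.comp_aestronglyMeasurable (hXm.const_mul 0))))
    (Filter.Eventually.of_forall fun ω ε hε => by
      rw [Real.norm_eq_abs, abs_mul, abs_mul, abs_of_pos (Real.exp_pos _)]
      have := aux_bound hδ (X ω) ε (by simpa [Metric.mem_ball, Real.dist_eq] using hε)
      calc |r ω| * (|X ω| * Real.exp (ε * X ω))
          ≤ |r ω| * ((2 / δ) * Real.exp (δ * |X ω|)) :=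
            mul_le_mul_of_nonneg_left this (abs_nonneg _)
        _ = (2 / δ) * (|r ω| * Real.exp (δ * |X ω|)) := by ring)
    hrbound_int
    (Filter.Eventually.of_forall fun ω ε hε => by
      have := ((hasDerivAt_mul_const (X ω)).exp (x := ε)).const_mul (r ω)
      simpa [mul_comm, mul_assoc, mul_left_comm] using this)
  -- extract values at 0
  have hD0 : (∫ ω, Real.exp ((0 : ℝ) * X ω) ∂μ) = 1 := by simp
  have hD' : HasDerivAt (fun ε => ∫ ω, Real.exp (ε * X ω) ∂μ) 0 0 := by
    have := hD.2
    simpa [hXmean] using this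
  have hN' : HasDerivAt (fun ε => ∫ ω, r ω * Real.exp (ε * X ω) ∂μ) 0 0 := by
    have := hN.2
    simpa [hrX] using this
  -- quotient
  have hquot : HasDerivAt
      (fun ε => (∫ ω, r ω * Real.exp (ε * X ω) ∂μ) / (∫ ω, Real.exp (ε * X ω) ∂μ)) 0 0 := by
    have := hN'.div hD' (by rw [hD0]; norm_num)
    simp [hD0] at this; exact this
  -- F agrees with the quotient near 0
  refine hquot.congr_of_eventuallyEq ?_
  have hball : Metric.ball (0 : ℝ) δ ∈ nhds (0 : ℝ) := Metric.ball_mem_nhds _ hδ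
  filter_upwards [hball] with ε hε
  rw [hF ε (by simpa [Metric.mem_ball, Real.dist_eq] using hε)]
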